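/- Let B be a C*-algebra, σ a *-automorphism of B, and D a closed *-subalgebra of B such that d·σᵏ(e) ∈ σᵏ(D) for all d, e ∈ D and all integers k ≥ 1. Then the norm closure of the set of all finite sums ∑_{j ∈ S} σʲ(d_j), where S ranges over finite subsets of ℤ and d_j ∈ D, is the smallest σ-invariant closed *-subalgebra of B containing D; that is, it is a closed *-subalgebra C with σ(C) = C and D ⊆ C, and it is contained in every closed *-subalgebra C' of B with σ(C') = C' and D ⊆ C'. -/

import Mathlib

/-- The integer power `σᵏ` (`k ∈ ℤ`) of a *-automorphism, as a function. -/
noncomputable def starAutZPow {B : Type*} [Add B] [Mul B] [SMul ℂ B] [Star B]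
    (σ : B ≃⋆ₐ[ℂ] B) (k : ℤ) : B → B :=
  ⇑(σ.toRingEquiv.toEquiv ^ k)

/-- If `d·σᵏ(e) ∈ σᵏ(D)` for all `d, e ∈ D`, `k ≥ 1`, then the norm closure of the set of
finite sums `∑_{j ∈ S} σʲ(d_j)` (`S ⊆ ℤ` finite, `d_j ∈ D`) is the smallest σ-invariant closed
*-subalgebra of `B` containing `D`. -/
theorem stmt14 {B : Type*} [NonUnitalNormedRing B] [StarRing B] [CStarRing B]
    [NormedSpace ℂ B] [IsScalarTower ℂ B B] [SMulCommClass ℂ B B] [StarModule ℂ B]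
    [CompleteSpace B]
    (σ : B ≃⋆ₐ[ℂ] B) (D : NonUnitalStarSubalgebra ℂ B) (hD : IsClosed (D : Set B))
    (h1 : ∀ d ∈ D, ∀ e ∈ D, ∀ k : ℤ, 1 ≤ k →
        d * starAutZPow σ k e ∈ starAutZPow σ k '' (D : Set B)) :
    ∃ C : NonUnitalStarSubalgebra ℂ B,
      (C : Set B) = closure {x : B | ∃ (s : Finset ℤ) (d : ℤ → B),
          (∀ j ∈ s, d j ∈ D) ∧ x = ∑ j ∈ s, starAutZPow σ j (d j)} ∧
      IsClosed (C : Set B) ∧ ⇑σ '' (C : Set B) = (C : Set B) ∧ (D : Set B) ⊆ (C : Set B) ∧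
      ∀ C' : NonUnitalStarSubalgebra ℂ B, IsClosed (C' : Set B) →
        ⇑σ '' (C' : Set B) = (C' : Set B) → (D : Set B) ⊆ (C' : Set B) →
          (C : Set B) ⊆ (C' : Set B) := by
  -- Basic facts about `starAutZPow`
  have hE : ∀ (k : ℤ) (x : B), starAutZPow σ k x = (σ.toRingEquiv.toEquiv ^ k) x :=
    fun _ _ => rfl
  have hcomp : ∀ (j k : ℤ) (x : B),
      starAutZPow σ j (starAutZPow σ k x) = starAutZPow σ (j + k) x := by
    intro j k x
    simp only [hE]
    rw [zpow_add]
    rfl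
  have h0 : ∀ x : B, starAutZPow σ 0 x = x := fun x => by
    simp only [hE]; rw [zpow_zero]; rfl
  have h1' : ∀ x : B, starAutZPow σ 1 x = σ x := fun x => by
    simp only [hE]; rw [zpow_one]; rfl
  have hsucc : ∀ (k : ℤ) (x : B), starAutZPow σ (k + 1) x = σ (starAutZPow σ k x) := by
    intro k x
    rw [← h1' (starAutZPow σ k x), hcomp, add_comm]
  have hpred : ∀ (k : ℤ) (x : B), starAutZPow σ (k - 1) x = σ.symm (starAutZPow σ k x) := by
    intro k x
    simp only [hE]
    rw [sub_eq_neg_add, zpow_add, zpow_neg_one]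
    rfl
  have hmapadd : ∀ (k : ℤ) (x y : B),
      starAutZPow σ k (x + y) = starAutZPow σ k x + starAutZPow σ k y := by
    intro k
    induction k using Int.induction_on with
    | zero => intro x y; simp [h0]
    | succ n ih => intro x y; rw [hsucc, hsucc, hsucc, ih, map_add]
    | pred n ih =>
      intro x y
      rw [show (-(n:ℤ) - 1) = (-(n:ℤ)) - 1 from rfl, hpred, hpred, hpred, ih, map_add]
  have hmapmul : ∀ (k : ℤ) (x y : B),
      starAutZPow σ k (x * y) = starAutZPow σ k x * starAutZPow σ k y := by
    intro k
    induction k using Int.induction_on with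
    | zero => intro x y; simp [h0]
    | succ n ih => intro x y; rw [hsucc, hsucc, hsucc, ih, map_mul]
    | pred n ih =>
      intro x y
      rw [show (-(n:ℤ) - 1) = (-(n:ℤ)) - 1 from rfl, hpred, hpred, hpred, ih, map_mul]
  have hmapzero : ∀ k : ℤ, starAutZPow σ k (0 : B) = 0 := by
    intro k
    induction k using Int.induction_on with
    | zero => simp [h0]
    | succ n ih => rw [hsucc, ih, map_zero]
    | pred n ih => rw [show (-(n:ℤ) - 1) = (-(n:ℤ)) - 1 from rfl, hpred, ih, map_zero]
  have hmapsmul : ∀ (k : ℤ) (c : ℂ) (x : B),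
      starAutZPow σ k (c • x) = c • starAutZPow σ k x := by
    intro k
    induction k using Int.induction_on with
    | zero => intro c x; simp [h0]
    | succ n ih => intro c x; rw [hsucc, hsucc, ih, map_smul]
    | pred n ih =>
      intro c x
      rw [show (-(n:ℤ) - 1) = (-(n:ℤ)) - 1 from rfl, hpred, hpred, ih, map_smul]
  have hmapstar : ∀ (k : ℤ) (x : B),
      starAutZPow σ k (star x) = star (starAutZPow σ k x) := by
    intro k
    induction k using Int.induction_on with
    | zero => intro x; simp [h0]
    | succ n ih => intro x; rw [hsucc, hsucc, ih, map_star]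
    | pred n ih =>
      intro x
      rw [show (-(n:ℤ) - 1) = (-(n:ℤ)) - 1 from rfl, hpred, hpred, ih, map_star]
  set T : Set B := {x : B | ∃ (s : Finset ℤ) (d : ℤ → B),
      (∀ j ∈ s, d j ∈ D) ∧ x = ∑ j ∈ s, starAutZPow σ j (d j)} with hT
  -- single elements
  have hsingle : ∀ (k : ℤ) (d : B), d ∈ D → starAutZPow σ k d ∈ T := by
    intro k d hd
    exact ⟨{k}, fun _ => d, fun j _ => hd, by simp⟩
  -- zero
  have hzeroT : (0 : B) ∈ T := ⟨∅, fun _ => 0, fun j hj => by simp at hj, by simp⟩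
  -- addition
  have haddT : ∀ x ∈ T, ∀ y ∈ T, x + y ∈ T := by
    rintro x ⟨s, d, hd, rfl⟩ y ⟨t, e, he, rfl⟩
    refine ⟨s ∪ t, fun j => (if j ∈ s then d j else 0) + (if j ∈ t then e j else 0),
      fun j hj => add_mem
        (by by_cases h : j ∈ s
            · simpa [h] using hd j h
            · simp [h, zero_mem])
        (by by_cases h : j ∈ t
            · simpa [h] using he j h
            · simp [h, zero_mem]), ?_⟩
    have : ∀ j : ℤ, starAutZPow σ j ((if j ∈ s then d j else 0) + (if j ∈ t then e j else 0))
        = starAutZPow σ j (if j ∈ s then d j else 0)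
          + starAutZPow σ j (if j ∈ t then e j else 0) := fun j => hmapadd j _ _
    rw [Finset.sum_congr rfl fun j _ => this j, Finset.sum_add_distrib]
    congr 1
    · rw [← Finset.sum_subset (Finset.subset_union_left (s₂ := t))]
      · exact Finset.sum_congr rfl fun j hj => by simp [hj]
      · intro j _ hj; simp [hj, hmapzero]
    · rw [← Finset.sum_subset (Finset.subset_union_right (s₁ := s))]
      · exact Finset.sum_congr rfl fun j hj => by simp [hj]
      · intro j _ hj; simp [hj, hmapzero]
  -- scalar multiplication
  have hsmulT : ∀ (c : ℂ), ∀ x ∈ T, c • x ∈ T := by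
    rintro c x ⟨s, d, hd, rfl⟩
    refine ⟨s, fun j => c • d j, fun j hj => SMulMemClass.smul_mem c (hd j hj), ?_⟩
    rw [Finset.smul_sum]
    exact Finset.sum_congr rfl fun j _ => (hmapsmul j c (d j)).symm
  -- star
  have hstarT : ∀ x ∈ T, star x ∈ T := by
    rintro x ⟨s, d, hd, rfl⟩
    refine ⟨s, fun j => star (d j), fun j hj => star_mem (hd j hj), ?_⟩
    rw [star_sum]
    exact Finset.sum_congr rfl fun j _ => (hmapstar j (d j)).symm
  -- products of single generators, ordered case
  have hmul_le : ∀ (j k : ℤ), j ≤ k → ∀ d ∈ D, ∀ e ∈ D,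
      ∃ f ∈ D, starAutZPow σ j d * starAutZPow σ k e = starAutZPow σ k f := by
    intro j k hjk d hd e he
    rcases eq_or_lt_of_le hjk with rfl | hlt
    · exact ⟨d * e, mul_mem hd he, (hmapmul j d e).symm⟩
    · have h1k : (1 : ℤ) ≤ k - j := by omega
      obtain ⟨f, hf, hfe⟩ := h1 d hd e he (k - j) h1k
      refine ⟨f, hf, ?_⟩
      have : starAutZPow σ j d * starAutZPow σ k e
          = starAutZPow σ j (d * starAutZPow σ (k - j) e) := by
        rw [hmapmul, hcomp]
        congr 2
        omega
      rw [this, ← hfe, hcomp]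
      congr 1
      omega
  -- products of single generators, general case
  have hmul_single : ∀ (j k : ℤ), ∀ d ∈ D, ∀ e ∈ D,
      starAutZPow σ j d * starAutZPow σ k e ∈ T := by
    intro j k d hd e he
    rcases le_total j k with hjk | hkj
    · obtain ⟨f, hf, hfe⟩ := hmul_le j k hjk d hd e he
      rw [hfe]; exact hsingle k f hf
    · obtain ⟨f, hf, hfe⟩ := hmul_le k j hkj (star e) (star_mem he) (star d) (star_mem hd)
      have : starAutZPow σ j d * starAutZPow σ k e
          = star (starAutZPow σ k (star e) * starAutZPow σ j (star d)) := by
        rw [star_mul, hmapstar, hmapstar, star_star, star_star]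
      rw [this, hfe, ← hmapstar]
      exact hsingle j (star f) (star_mem hf)
  -- multiplication
  have hmulT : ∀ x ∈ T, ∀ y ∈ T, x * y ∈ T := by
    rintro x ⟨s, d, hd, rfl⟩ y ⟨t, e, he, rfl⟩
    rw [Finset.sum_mul_sum]
    have : ∀ p ∈ s ×ˢ t, starAutZPow σ p.1 (d p.1) * starAutZPow σ p.2 (e p.2) ∈ T := by
      rintro ⟨j, k⟩ hp
      rw [Finset.mem_product] at hp
      exact hmul_single j k (d j) (hd j hp.1) (e k) (he k hp.2)
    rw [← Finset.sum_product']
    -- sum of elements of T is in T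
    have hsum : ∀ (u : Finset (ℤ × ℤ)) (g : ℤ × ℤ → B), (∀ p ∈ u, g p ∈ T) →
        ∑ p ∈ u, g p ∈ T := by
      intro u
      induction u using Finset.induction with
      | empty => intro g _; simpa using hzeroT
      | insert _ _ hnot ih =>
        intro g hg
        rw [Finset.sum_insert hnot]
        exact haddT _ (hg _ (Finset.mem_insert_self _ _)) _
          (ih g fun p hp => hg p (Finset.mem_insert_of_mem hp))
    exact hsum _ _ this
  -- T as a subalgebra
  set Tsub : NonUnitalStarSubalgebra ℂ B :=
    { carrier := T
      add_mem' := fun hx hy => haddT _ hx _ hy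
      zero_mem' := hzeroT
      mul_mem' := fun hx hy => hmulT _ hx _ hy
      smul_mem' := fun c x hx => hsmulT c x hx
      star_mem' := fun hx => hstarT _ hx } with hTsub
  have hTsub_coe : (Tsub : Set B) = T := rfl
  refine ⟨Tsub.topologicalClosure, rfl, isClosed_closure, ?_, ?_, ?_⟩
  · -- σ-invariance
    show ⇑σ '' closure T = closure T
    letI : NonUnitalCStarAlgebra B := { }
    have hcontσ : Continuous σ := by
      exact (NonUnitalStarAlgHom.isometry (σ : B →⋆ₙₐ[ℂ] B) σ.injective).continuous
    have hcontσ' : Continuous σ.symm := by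
      exact (NonUnitalStarAlgHom.isometry (σ.symm : B →⋆ₙₐ[ℂ] B) σ.symm.injective).continuous
    have himgT : ⇑σ '' T = T := by
      apply Set.eq_of_subset_of_subset
      · rintro _ ⟨x, ⟨s, d, hd, rfl⟩, rfl⟩
        have : σ (∑ j ∈ s, starAutZPow σ j (d j))
            = ∑ j ∈ s, starAutZPow σ (j + 1) (d j) := by
          rw [map_sum]
          exact Finset.sum_congr rfl fun j _ => by
            rw [← h1' (starAutZPow σ j (d j)), hcomp]
            congr 1; omega
        rw [this]
        refine ⟨s.map (Equiv.toEmbedding (Equiv.addRight (1 : ℤ))), fun j => d (j - 1),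
          fun j hj => ?_, ?_⟩
        · simp only [Finset.mem_map, Equiv.toEmbedding_apply, Equiv.coe_addRight] at hj
          obtain ⟨i, hi, rfl⟩ := hj
          simpa using hd i hi
        · rw [Finset.sum_map]
          exact Finset.sum_congr rfl fun j _ => by
            simp only [Equiv.toEmbedding_apply, Equiv.coe_addRight, add_sub_cancel_right]
      · rintro x ⟨s, d, hd, rfl⟩
        refine ⟨∑ j ∈ s, starAutZPow σ (j - 1) (d j), ?_, ?_⟩
        · refine ⟨s.map (Equiv.toEmbedding (Equiv.addRight (-1 : ℤ))), fun j => d (j + 1),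
            fun j hj => ?_, ?_⟩
          · simp only [Finset.mem_map, Equiv.toEmbedding_apply, Equiv.coe_addRight] at hj
            obtain ⟨i, hi, rfl⟩ := hj
            simpa using hd i hi
          · rw [Finset.sum_map]
            exact Finset.sum_congr rfl fun j _ => by
              simp only [Equiv.toEmbedding_apply, Equiv.coe_addRight]
              congr 2 <;> omega
        · rw [map_sum]
          exact Finset.sum_congr rfl fun j _ => by
            rw [← h1' (starAutZPow σ (j - 1) (d j)), hcomp]
            congr 1; omega
    have h3 : ⇑σ.symm '' (⇑σ '' T) = T := by
      rw [← Set.image_comp]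
      have : ⇑σ.symm ∘ ⇑σ = id := funext fun y => σ.symm_apply_apply y
      rw [this, Set.image_id]
    have hmain : ⇑σ '' closure T = closure (⇑σ '' T) := by
      apply subset_antisymm (image_closure_subset_closure_image hcontσ)
      intro x hx
      refine ⟨σ.symm x, ?_, σ.apply_symm_apply x⟩
      have h2 := image_closure_subset_closure_image (s := ⇑σ '' T) hcontσ'
      have := h2 ⟨x, hx, rfl⟩
      rwa [h3] at this
    rw [hmain, himgT]
  · -- D ⊆ C
    intro d hd
    apply subset_closure
    have := hsingle 0 d hd
    rwa [h0] at this
  · -- minimality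
    intro C' hC'closed hC'inv hC'D
    have hfwd : ∀ x ∈ C', σ x ∈ C' := by
      intro x hx
      show σ x ∈ (C' : Set B)
      rw [← hC'inv]; exact ⟨x, hx, rfl⟩
    have hbwd : ∀ x ∈ C', σ.symm x ∈ C' := by
      intro x hx
      have hx' : x ∈ (C' : Set B) := hx
      rw [← hC'inv] at hx'
      obtain ⟨y, hy, rfl⟩ := hx'
      simpa using hy
    have hzpow : ∀ (k : ℤ), ∀ x ∈ C', starAutZPow σ k x ∈ C' := by
      intro k
      induction k using Int.induction_on with
      | zero => intro x hx; rwa [h0]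
      | succ n ih =>
        intro x hx
        rw [hsucc]
        exact hfwd _ (ih x hx)
      | pred n ih =>
        intro x hx
        rw [show (-(n:ℤ) - 1) = (-(n:ℤ)) - 1 from rfl, hpred]
        exact hbwd _ (ih x hx)
    have hTC' : T ⊆ (C' : Set B) := by
      rintro x ⟨s, d, hd, rfl⟩
      exact sum_mem fun j hj => hzpow j (d j) (hC'D (hd j hj))
    calc (Tsub.topologicalClosure : Set B) = closure T := rfl
      _ ⊆ (C' : Set B) := closure_minimal hTC' hC'closed
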